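/- In the linear IV model with F of full row rank q and Σ'_{XW}Σ_{XW} invertible, the penalized estimator φ_ρ = (ρ F'F + Σ'_{XW}Σ_{XW})⁻¹ Σ'_{XW} E[WY] satisfies lim_{ρ→∞} φ_ρ = φ - A⁻¹ F'(F A⁻¹ F')⁻¹ F φ, where A = Σ'_{XW}Σ_{XW} and φ = A⁻¹ Σ'_{XW}E[WY]; in particular lim_{ρ→∞} F φ_ρ = 0. -/

import Mathlib

open Matrix Filter

section aux
variable {n m : Type*} [Fintype n] [Fintype m] [DecidableEq n] [DecidableEq m]

lemma posSemidef_smul' (M : Matrix n n ℝ) (c : ℝ) (hc : 0 ≤ c)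
    (hM : M.PosSemidef) : (c • M).PosSemidef := by
  rw [posSemidef_iff_dotProduct_mulVec]
  constructor
  · show (c • M)ᴴ = c • M
    rw [conjTranspose_smul, hM.1]
    simp
  · intro x
    rw [smul_mulVec, dotProduct_smul]
    exact mul_nonneg hc (hM.dotProduct_mulVec_nonneg x)

lemma posDef_sandwich (A : Matrix n n ℝ) (hA : A.PosDef) (F : Matrix m n ℝ)
    (hFinj : Function.Injective (Fᵀ.mulVec)) : (F * A * Fᵀ).PosDef := by
  have hsym : Aᵀ = A := hA.1
  rw [posDef_iff_dotProduct_mulVec]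
  constructor
  · show (F * A * Fᵀ)ᴴ = F * A * Fᵀ
    simp [conjTranspose_mul, hsym, Matrix.mul_assoc]
  · intro x hx
    have hy : Fᵀ *ᵥ x ≠ 0 := fun h => hx (hFinj (by simpa using h))
    have key : x ⬝ᵥ ((F * A * Fᵀ) *ᵥ x) = (Fᵀ *ᵥ x) ⬝ᵥ (A *ᵥ (Fᵀ *ᵥ x)) := by
      rw [← mulVec_mulVec, ← mulVec_mulVec, dotProduct_mulVec, ← mulVec_transpose]
    have := hA.dotProduct_mulVec_pos hy
    simp only [star, RCLike.star_def] at this ⊢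
    simpa [key] using this
end aux

section wood
variable {n m : Type*} [Fintype n] [Fintype m] [DecidableEq n] [DecidableEq m]

lemma woodbury (A : Matrix n n ℝ) (hA : IsUnit A.det) (F : Matrix m n ℝ) (ρ : ℝ) (hρ : 0 < ρ)
    (hS : IsUnit (ρ⁻¹ • (1 : Matrix m m ℝ) + F * A⁻¹ * Fᵀ).det) :
    (ρ • (Fᵀ * F) + A)⁻¹
      = A⁻¹ - A⁻¹ * Fᵀ * (ρ⁻¹ • (1 : Matrix m m ℝ) + F * A⁻¹ * Fᵀ)⁻¹ * F * A⁻¹ := by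
  set B := A⁻¹ with hB
  set G := F * B * Fᵀ with hG
  set S := ρ⁻¹ • (1 : Matrix m m ℝ) + G with hSdef
  have hAB : A * B = 1 := Matrix.mul_nonsing_inv A hA
  have hSS : S * S⁻¹ = 1 := Matrix.mul_nonsing_inv S hS
  apply Matrix.inv_eq_right_inv
  have hABX : ∀ X : Matrix n n ℝ, A * (B * X) = X := fun X => by
    rw [← Matrix.mul_assoc, hAB, Matrix.one_mul]
  have hscal : ρ • (G * S⁻¹) + S⁻¹ = ρ • (1 : Matrix m m ℝ) := by
    have h : ρ • G + 1 = ρ • S := by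
      rw [hSdef, smul_add, smul_smul, mul_inv_cancel₀ hρ.ne', one_smul, add_comm]
    calc ρ • (G * S⁻¹) + S⁻¹ = (ρ • G + 1) * S⁻¹ := by
          rw [Matrix.add_mul, smul_mul_assoc, Matrix.one_mul]
      _ = ρ • (S * S⁻¹) := by rw [h, smul_mul_assoc]
      _ = ρ • 1 := by rw [hSS]
  have key : ρ • (Fᵀ * (F * (B * (Fᵀ * (S⁻¹ * (F * B)))))) + Fᵀ * (S⁻¹ * (F * B))
      = ρ • (Fᵀ * (F * B)) := by
    have := congrArg (fun X => Fᵀ * (X * (F * B))) hscal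
    simpa [Matrix.add_mul, Matrix.mul_add, smul_mul_assoc, mul_smul_comm, hG,
      Matrix.mul_assoc] using this
  have expand : (ρ • (Fᵀ * F) + A) * (B - B * Fᵀ * S⁻¹ * F * B)
      = ρ • (Fᵀ * (F * B)) - ρ • (Fᵀ * (F * (B * (Fᵀ * (S⁻¹ * (F * B)))))) +
        (1 - Fᵀ * (S⁻¹ * (F * B))) := by
    simp only [Matrix.add_mul, Matrix.mul_sub, smul_mul_assoc, mul_smul_comm,
      Matrix.mul_assoc, hABX, hAB]
    abel
  rw [expand, ← key]
  abel
end wood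


/-- Limit of the penalized linear IV estimator. With `A = Σ'_{XW}Σ_{XW}`
positive definite, `F` of full row rank `q`, and `b = Σ'_{XW}E[WY]`, the estimator
`φ_ρ = (ρ F'F + A)⁻¹ b` satisfies `φ_ρ → φ - A⁻¹F'(FA⁻¹F')⁻¹Fφ` as `ρ → ∞`, where
`φ = A⁻¹ b`; in particular `F φ_ρ → 0`. -/
theorem penalized_linear_iv_limit
    {p q : ℕ}
    (A : Matrix (Fin (p + q)) (Fin (p + q)) ℝ) (hA : A.PosDef)
    (F : Matrix (Fin q) (Fin (p + q)) ℝ) (hF : F.rank = q)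
    (b : Fin (p + q) → ℝ) :
    Tendsto (fun ρ : ℝ => (ρ • (Fᵀ * F) + A)⁻¹ *ᵥ b) atTop
        (nhds (A⁻¹ *ᵥ b - (A⁻¹ * Fᵀ * (F * A⁻¹ * Fᵀ)⁻¹ * F) *ᵥ (A⁻¹ *ᵥ b))) ∧
    Tendsto (fun ρ : ℝ => F *ᵥ ((ρ • (Fᵀ * F) + A)⁻¹ *ᵥ b)) atTop (nhds 0) := by
  have hAdet : IsUnit A.det := isUnit_iff_ne_zero.mpr hA.det_pos.ne'
  -- injectivity of Fᵀ.mulVec from full row rank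
  have hFli : LinearIndependent ℝ F.row := by
    rw [linearIndependent_iff_card_eq_finrank_span]
    rw [Set.finrank, ← Matrix.rank_eq_finrank_span_row, hF, Fintype.card_fin]
  have hFinj : Function.Injective (Fᵀ.mulVec) := by
    rw [Matrix.mulVec_injective_iff]
    simpa using hFli
  set G := F * A⁻¹ * Fᵀ with hGdef
  have hG : G.PosDef := posDef_sandwich A⁻¹ hA.inv F hFinj
  have hGdet : IsUnit G.det := isUnit_iff_ne_zero.mpr hG.det_pos.ne'
  have hGG : G * G⁻¹ = 1 := Matrix.mul_nonsing_inv G hGdet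
  -- determinant of the shifted matrix is a unit for ρ > 0
  have hSdet : ∀ ρ : ℝ, 0 < ρ → IsUnit (ρ⁻¹ • (1 : Matrix (Fin q) (Fin q) ℝ) + G).det := by
    intro ρ hρ
    have hpsd : (ρ⁻¹ • (1 : Matrix (Fin q) (Fin q) ℝ)).PosSemidef :=
      posSemidef_smul' 1 ρ⁻¹ (inv_nonneg.mpr hρ.le) (Matrix.PosSemidef.one)
    exact isUnit_iff_ne_zero.mpr (Matrix.PosDef.posSemidef_add hpsd hG).det_pos.ne'
  -- the limiting matrix function
  have h1 : Tendsto (fun ρ : ℝ => ρ⁻¹ • (1 : Matrix (Fin q) (Fin q) ℝ) + G) atTop (nhds G) := by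
    have hz : Tendsto (fun ρ : ℝ => ρ⁻¹) atTop (nhds (0 : ℝ)) := tendsto_inv_atTop_zero
    have hs : Tendsto (fun ρ : ℝ => ρ⁻¹ • (1 : Matrix (Fin q) (Fin q) ℝ)) atTop
        (nhds ((0 : ℝ) • (1 : Matrix (Fin q) (Fin q) ℝ))) := hz.smul_const _
    have := hs.add_const G
    simpa using this
  have h2 : ContinuousAt Inv.inv G := by
    apply continuousAt_matrix_inv
    rw [Ring.inverse_eq_inv']
    exact continuousAt_inv₀ (isUnit_iff_ne_zero.mp hGdet)
  have hinv : Tendsto (fun ρ : ℝ => (ρ⁻¹ • (1 : Matrix (Fin q) (Fin q) ℝ) + G)⁻¹) atTop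
      (nhds G⁻¹) := h2.tendsto.comp h1
  have hcont : Continuous fun X : Matrix (Fin q) (Fin q) ℝ =>
      (A⁻¹ - A⁻¹ * Fᵀ * X * F * A⁻¹) *ᵥ b :=
    (continuous_const.sub
      ((((continuous_const.matrix_mul continuous_id).matrix_mul
        continuous_const).matrix_mul continuous_const))).matrix_mulVec continuous_const
  have hmain : Tendsto (fun ρ : ℝ => (ρ • (Fᵀ * F) + A)⁻¹ *ᵥ b) atTop
      (nhds ((A⁻¹ - A⁻¹ * Fᵀ * G⁻¹ * F * A⁻¹) *ᵥ b)) := by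
    refine Tendsto.congr' ?_ ((hcont.continuousAt).tendsto.comp hinv)
    filter_upwards [eventually_gt_atTop (0 : ℝ)] with ρ hρ
    rw [Function.comp_apply, woodbury A hAdet F ρ hρ (hSdet ρ hρ)]
  have hval : (A⁻¹ - A⁻¹ * Fᵀ * G⁻¹ * F * A⁻¹) *ᵥ b
      = A⁻¹ *ᵥ b - (A⁻¹ * Fᵀ * G⁻¹ * F) *ᵥ (A⁻¹ *ᵥ b) := by
    rw [Matrix.sub_mulVec, Matrix.mulVec_mulVec]
  have part1 : Tendsto (fun ρ : ℝ => (ρ • (Fᵀ * F) + A)⁻¹ *ᵥ b) atTop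
      (nhds (A⁻¹ *ᵥ b - (A⁻¹ * Fᵀ * G⁻¹ * F) *ᵥ (A⁻¹ *ᵥ b))) := hval ▸ hmain
  refine ⟨part1, ?_⟩
  have hFc : Continuous fun v : Fin (p + q) → ℝ => F *ᵥ v :=
    (continuous_const : Continuous fun _ : Fin (p + q) → ℝ => F).matrix_mulVec continuous_id
  have t2 := (hFc.continuousAt.tendsto).comp part1
  have hzero : F *ᵥ (A⁻¹ *ᵥ b - (A⁻¹ * Fᵀ * G⁻¹ * F) *ᵥ (A⁻¹ *ᵥ b)) = 0 := by
    have hkey : F * (A⁻¹ * Fᵀ * G⁻¹ * F * A⁻¹) = F * A⁻¹ := by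
      rw [show F * (A⁻¹ * Fᵀ * G⁻¹ * F * A⁻¹) = F * A⁻¹ * Fᵀ * G⁻¹ * (F * A⁻¹) from by
        simp only [Matrix.mul_assoc], ← hGdef, hGG, Matrix.one_mul]
    rw [Matrix.mulVec_sub]
    simp only [Matrix.mulVec_mulVec]
    rw [hkey, sub_self]
  rw [← hzero]
  exact t2
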